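/- arXiv:1601.04300 — 7 statements merged into one kernel-verified Lean document; each statement's English description precedes it below -/
import Mathlib

section
/- The derivative with respect to ξ of the expression K = (v'/v)² + 16c_q[(h² − C)v + (4c_z)²/sinh²(4c_zξ) · v⁻¹ − 2(4c_z coth(4c_zξ))h] vanishes identically whenever (v,h) satisfy the reduced system (log v)'' + 8c_q[(h² − C)v − (4c_z/sinh(4c_zξ))² v⁻¹] = 0 and v h' + (4c_z/sinh(4c_zξ))² = 0. -/
set_option maxHeartbeats 1000000 in
/-- The first integral `K` of the reduced system obtained from the Gauss-Codazzi
equations under the constraint that `1/Q` be harmonic: its derivative with respect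
to `ξ` vanishes identically along solutions of the reduced system. -/
theorem stmt_0 (cq cz C : ℂ) (hcz : cz ≠ 0) (v h : ℝ → ℂ) (s : Set ℝ) (hs : IsOpen s)
    (hv0 : ∀ ξ ∈ s, v ξ ≠ 0)
    (hsinh : ∀ ξ ∈ s, Complex.sinh (4 * cz * (ξ : ℂ)) ≠ 0)
    (hvd : ∀ ξ ∈ s, DifferentiableAt ℝ v ξ)
    (hvd2 : ∀ ξ ∈ s, DifferentiableAt ℝ (deriv v) ξ)
    (hhd : ∀ ξ ∈ s, DifferentiableAt ℝ h ξ)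
    (ode1 : ∀ ξ ∈ s, deriv (fun t => deriv v t / v t) ξ
        + 8 * cq * ((h ξ ^ 2 - C) * v ξ
          - (4 * cz / Complex.sinh (4 * cz * (ξ : ℂ))) ^ 2 / v ξ) = 0)
    (ode2 : ∀ ξ ∈ s, v ξ * deriv h ξ
        + (4 * cz / Complex.sinh (4 * cz * (ξ : ℂ))) ^ 2 = 0) :
    ∀ ξ ∈ s, deriv (fun t => (deriv v t / v t) ^ 2
        + 16 * cq * ((h t ^ 2 - C) * v t
          + (4 * cz) ^ 2 / Complex.sinh (4 * cz * (t : ℂ)) ^ 2 / v t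
          - 2 * (4 * cz * (Complex.cosh (4 * cz * (t : ℂ)) / Complex.sinh (4 * cz * (t : ℂ))))
              * h t)) ξ = 0 := by
  intro ξ hξ
  set S := Complex.sinh (4 * cz * (ξ : ℂ)) with hSdef
  set Cc := Complex.cosh (4 * cz * (ξ : ℂ)) with hCdef
  have hSne : S ≠ 0 := hsinh ξ hξ
  have hVne : v ξ ≠ 0 := hv0 ξ hξ
  have hre : HasDerivAt (fun t : ℝ => (t : ℂ)) 1 ξ := by
    simpa using (hasDerivAt_id ξ).ofReal_comp
  have hlin : HasDerivAt (fun t : ℝ => 4 * cz * (t : ℂ)) (4 * cz) ξ := by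
    simpa using hre.const_mul (4 * cz)
  have hS : HasDerivAt (fun t : ℝ => Complex.sinh (4 * cz * (t : ℂ))) (4 * cz * Cc) ξ := by
    simpa [hCdef, smul_eq_mul, mul_comm, Function.comp_def] using
      (Complex.hasDerivAt_sinh (4 * cz * (ξ:ℂ))).scomp ξ hlin
  have hC : HasDerivAt (fun t : ℝ => Complex.cosh (4 * cz * (t : ℂ))) (4 * cz * S) ξ := by
    simpa [hSdef, smul_eq_mul, mul_comm, Function.comp_def] using
      (Complex.hasDerivAt_cosh (4 * cz * (ξ:ℂ))).scomp ξ hlin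
  have hid : Cc ^ 2 - S ^ 2 = 1 := Complex.cosh_sq_sub_sinh_sq _
  have hv := (hvd ξ hξ).hasDerivAt
  have hh := (hhd ξ hξ).hasDerivAt
  have hw : HasDerivAt (fun t => deriv v t / v t) (deriv (fun t => deriv v t / v t) ξ) ξ :=
    (((hvd2 ξ hξ).div (hvd ξ hξ) hVne)).hasDerivAt
  set W' := deriv (fun t => deriv v t / v t) ξ with hW'def
  -- coth derivative, simplified
  have hcoth : HasDerivAt
      (fun t : ℝ => Complex.cosh (4 * cz * (t : ℂ)) / Complex.sinh (4 * cz * (t : ℂ)))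
      (-(4 * cz) / S ^ 2) ξ := by
    have h0 := hC.div hS hSne
    have heq : (4 * cz * S * S - Cc * (4 * cz * Cc)) / S ^ 2 = -(4 * cz) / S ^ 2 := by
      rw [div_eq_div_iff (pow_ne_zero 2 hSne) (pow_ne_zero 2 hSne)]
      linear_combination (-(4 * cz) * S ^ 2) * hid
    rwa [heq] at h0
  have hh2 : HasDerivAt (fun t => h t ^ 2) (deriv h ξ * h ξ + h ξ * deriv h ξ) ξ := by
    simpa only [pow_two, Pi.mul_def] using hh.mul hh
  have hw2 : HasDerivAt (fun t => (deriv v t / v t) ^ 2)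
      (W' * (deriv v ξ / v ξ) + (deriv v ξ / v ξ) * W') ξ := by
    simpa only [pow_two, Pi.mul_def] using hw.mul hw
  have hS2 : HasDerivAt (fun t : ℝ => Complex.sinh (4 * cz * (t : ℂ)) ^ 2)
      (4 * cz * Cc * S + S * (4 * cz * Cc)) ξ := by
    simpa only [pow_two, Pi.mul_def] using hS.mul hS
  -- assemble
  have hA : HasDerivAt (fun t => (h t ^ 2 - C) * v t)
      ((deriv h ξ * h ξ + h ξ * deriv h ξ) * v ξ + (h ξ ^ 2 - C) * deriv v ξ) ξ :=
    (hh2.sub_const C).mul hv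
  have hB1 : HasDerivAt (fun t : ℝ => (4 * cz) ^ 2 / Complex.sinh (4 * cz * (t : ℂ)) ^ 2)
      ((0 * S ^ 2 - (4 * cz) ^ 2 * (4 * cz * Cc * S + S * (4 * cz * Cc))) / (S ^ 2) ^ 2) ξ :=
    (hasDerivAt_const ξ ((4 * cz) ^ 2)).div hS2 (pow_ne_zero 2 hSne)
  have hB : HasDerivAt
      (fun t : ℝ => (4 * cz) ^ 2 / Complex.sinh (4 * cz * (t : ℂ)) ^ 2 / v t)
      (((0 * S ^ 2 - (4 * cz) ^ 2 * (4 * cz * Cc * S + S * (4 * cz * Cc))) / (S ^ 2) ^ 2 * v ξ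
        - (4 * cz) ^ 2 / S ^ 2 * deriv v ξ) / v ξ ^ 2) ξ := hB1.div hv hVne
  have hG : HasDerivAt
      (fun t : ℝ => 2 * (4 * cz *
          (Complex.cosh (4 * cz * (t : ℂ)) / Complex.sinh (4 * cz * (t : ℂ)))) * h t)
      ((2 * (4 * cz * (-(4 * cz) / S ^ 2))) * h ξ + (2 * (4 * cz * (Cc / S))) * deriv h ξ) ξ :=
    ((hcoth.const_mul (4 * cz)).const_mul 2).mul hh
  have hK : HasDerivAt (fun t => (deriv v t / v t) ^ 2
        + 16 * cq * ((h t ^ 2 - C) * v t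
          + (4 * cz) ^ 2 / Complex.sinh (4 * cz * (t : ℂ)) ^ 2 / v t
          - 2 * (4 * cz * (Complex.cosh (4 * cz * (t : ℂ)) / Complex.sinh (4 * cz * (t : ℂ))))
              * h t))
      (W' * (deriv v ξ / v ξ) + (deriv v ξ / v ξ) * W'
        + 16 * cq * (((deriv h ξ * h ξ + h ξ * deriv h ξ) * v ξ + (h ξ ^ 2 - C) * deriv v ξ
          + ((0 * S ^ 2 - (4 * cz) ^ 2 * (4 * cz * Cc * S + S * (4 * cz * Cc))) / (S ^ 2) ^ 2 * v ξ
            - (4 * cz) ^ 2 / S ^ 2 * deriv v ξ) / v ξ ^ 2)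
          - ((2 * (4 * cz * (-(4 * cz) / S ^ 2))) * h ξ
            + (2 * (4 * cz * (Cc / S))) * deriv h ξ))) ξ := by
    exact hw2.add (((hA.add hB).sub hG).const_mul (16 * cq))
  rw [hK.deriv]
  have e1 := ode1 ξ hξ
  have e2 := ode2 ξ hξ
  rw [← hSdef] at e1 e2
  have hH' : deriv h ξ = -((4 * cz) ^ 2 / (S ^ 2 * v ξ)) := by
    field_simp at e2 ⊢
    linear_combination e2
  have hW' : W' = -(8 * cq * ((h ξ ^ 2 - C) * v ξ - (4 * cz / S) ^ 2 / v ξ)) := by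
    rw [← hW'def] at e1
    linear_combination e1
  rw [hH', hW']
  have hS2ne : S ^ 2 ≠ 0 := pow_ne_zero _ hSne
  have hS4ne : (S ^ 2) ^ 2 ≠ 0 := pow_ne_zero _ hS2ne
  have hV2ne : v ξ ^ 2 ≠ 0 := pow_ne_zero _ hVne
  field_simp
  ring_nf
end

section
/- The quantity K = (h''/h' + 8c_z coth(4c_zξ))² + 16c_q[(4c_z/sinh(4c_zξ))²(h² − C)/h' + h' + 8c_z coth(4c_zξ) h] is a first integral of the third-order ODE (log h')'' + 8c_q h' − (4c_z/sinh(4c_zξ))²(8c_q(h² − C)/h' + 2) = 0; that is, dK/dξ = 0 along every solution. -/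
set_option maxHeartbeats 2000000 in
/-- The Hazzidakis quantity
`K = (h''/h' + 8c_z coth(4c_z ξ))² + 16c_q[(4c_z/sinh(4c_z ξ))²(h²-C)/h' + h' + 8c_z coth(4c_z ξ) h]`
is a first integral of Bonnet's third-order ODE
`(log h')'' + 8c_q h' - (4c_z/sinh(4c_z ξ))²(8c_q(h²-C)/h' + 2) = 0`:
its derivative vanishes along every solution. -/
theorem stmt_2 (cq cz C : ℂ) (h : ℝ → ℂ) (s : Set ℝ) (hs : IsOpen s)
    (hh' : ∀ ξ ∈ s, deriv h ξ ≠ 0)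
    (hsinh : ∀ ξ ∈ s, Complex.sinh (4 * cz * (ξ : ℂ)) ≠ 0)
    (hhd : ∀ ξ ∈ s, DifferentiableAt ℝ h ξ)
    (hhd2 : ∀ ξ ∈ s, DifferentiableAt ℝ (deriv h) ξ)
    (hhd3 : ∀ ξ ∈ s, DifferentiableAt ℝ (deriv (deriv h)) ξ)
    (ode : ∀ ξ ∈ s, deriv (fun t => deriv (deriv h) t / deriv h t) ξ
        + 8 * cq * deriv h ξ
        - (4 * cz / Complex.sinh (4 * cz * (ξ : ℂ))) ^ 2
          * (8 * cq * (h ξ ^ 2 - C) / deriv h ξ + 2) = 0) :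
    ∀ ξ ∈ s, deriv (fun t =>
        (deriv (deriv h) t / deriv h t
            + 8 * cz * (Complex.cosh (4 * cz * (t : ℂ)) / Complex.sinh (4 * cz * (t : ℂ)))) ^ 2
        + 16 * cq * ((4 * cz / Complex.sinh (4 * cz * (t : ℂ))) ^ 2 * (h t ^ 2 - C) / deriv h t
          + deriv h t
          + 8 * cz * (Complex.cosh (4 * cz * (t : ℂ)) / Complex.sinh (4 * cz * (t : ℂ)))
            * h t)) ξ = 0 := by
  intro ξ hξ
  have H1 : HasDerivAt h (deriv h ξ) ξ := (hhd ξ hξ).hasDerivAt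
  have H2 : HasDerivAt (deriv h) (deriv (deriv h) ξ) ξ := (hhd2 ξ hξ).hasDerivAt
  have H3 : HasDerivAt (deriv (deriv h)) (deriv (deriv (deriv h)) ξ) ξ :=
    (hhd3 ξ hξ).hasDerivAt
  have hd1 : deriv h ξ ≠ 0 := hh' ξ hξ
  have hsh : Complex.sinh (4 * cz * (ξ : ℂ)) ≠ 0 := hsinh ξ hξ
  have hlin : HasDerivAt (fun t : ℝ => 4 * cz * (t : ℂ)) (4 * cz) ξ := by
    simpa using ((Complex.ofRealCLM.hasDerivAt (x := ξ)).const_mul (4 * cz))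
  have hS : HasDerivAt (fun t : ℝ => Complex.sinh (4 * cz * (t : ℂ)))
      (4 * cz * Complex.cosh (4 * cz * (ξ : ℂ))) ξ := by
    simpa [mul_comm, Function.comp_def] using (Complex.hasDerivAt_sinh (4 * cz * (ξ : ℂ))).comp ξ hlin
  have hC : HasDerivAt (fun t : ℝ => Complex.cosh (4 * cz * (t : ℂ)))
      (4 * cz * Complex.sinh (4 * cz * (ξ : ℂ))) ξ := by
    simpa [mul_comm, Function.comp_def] using (Complex.hasDerivAt_cosh (4 * cz * (ξ : ℂ))).comp ξ hlin
  set h0 := h ξ with hh0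
  set h1 := deriv h ξ with hh1
  set h2 := deriv (deriv h) ξ with hh2
  set h3 := deriv (deriv (deriv h)) ξ with hh3
  set sh := Complex.sinh (4 * cz * (ξ : ℂ)) with hshdef
  set ch := Complex.cosh (4 * cz * (ξ : ℂ)) with hchdef
  have fu : HasDerivAt (fun t => deriv (deriv h) t / deriv h t)
      ((h3 * h1 - h2 * h2) / h1 ^ 2) ξ := H3.div H2 hd1
  have hc : HasDerivAt (fun t : ℝ =>
        Complex.cosh (4 * cz * (t : ℂ)) / Complex.sinh (4 * cz * (t : ℂ)))
      ((4 * cz * sh * sh - ch * (4 * cz * ch)) / sh ^ 2) ξ := hC.div hS hsh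
  have fw : HasDerivAt (fun t : ℝ =>
        8 * cz * (Complex.cosh (4 * cz * (t : ℂ)) / Complex.sinh (4 * cz * (t : ℂ))))
      (8 * cz * ((4 * cz * sh * sh - ch * (4 * cz * ch)) / sh ^ 2)) ξ := hc.const_mul _
  have hq : HasDerivAt (fun t : ℝ => 4 * cz / Complex.sinh (4 * cz * (t : ℂ)))
      ((0 * sh - 4 * cz * (4 * cz * ch)) / sh ^ 2) ξ :=
    (hasDerivAt_const ξ (4 * cz)).div hS hsh
  have hq2 : HasDerivAt (fun t : ℝ =>
        (4 * cz / Complex.sinh (4 * cz * (t : ℂ)))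
          * (4 * cz / Complex.sinh (4 * cz * (t : ℂ))))
      ((0 * sh - 4 * cz * (4 * cz * ch)) / sh ^ 2 * (4 * cz / sh)
        + 4 * cz / sh * ((0 * sh - 4 * cz * (4 * cz * ch)) / sh ^ 2)) ξ := hq.mul hq
  have hnum : HasDerivAt (fun t : ℝ => h t * h t - C)
      (h1 * h0 + h0 * h1) ξ := (H1.mul H1).sub_const C
  have f3 : HasDerivAt (fun t : ℝ =>
        (4 * cz / Complex.sinh (4 * cz * (t : ℂ)))
          * (4 * cz / Complex.sinh (4 * cz * (t : ℂ))) * (h t * h t - C) / deriv h t)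
      (((((0 * sh - 4 * cz * (4 * cz * ch)) / sh ^ 2 * (4 * cz / sh)
          + 4 * cz / sh * ((0 * sh - 4 * cz * (4 * cz * ch)) / sh ^ 2)) * (h0 * h0 - C)
          + 4 * cz / sh * (4 * cz / sh) * (h1 * h0 + h0 * h1)) * h1
        - 4 * cz / sh * (4 * cz / sh) * (h0 * h0 - C) * h2) / h1 ^ 2) ξ :=
    (hq2.mul hnum).div H2 hd1
  have f5 : HasDerivAt (fun t : ℝ =>
        8 * cz * (Complex.cosh (4 * cz * (t : ℂ)) / Complex.sinh (4 * cz * (t : ℂ))) * h t)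
      (8 * cz * ((4 * cz * sh * sh - ch * (4 * cz * ch)) / sh ^ 2) * h0
        + 8 * cz * (ch / sh) * h1) ξ := fw.mul H1
  have fA : HasDerivAt (fun t =>
        (deriv (deriv h) t / deriv h t
            + 8 * cz * (Complex.cosh (4 * cz * (t : ℂ)) / Complex.sinh (4 * cz * (t : ℂ))))
          * (deriv (deriv h) t / deriv h t
            + 8 * cz * (Complex.cosh (4 * cz * (t : ℂ)) / Complex.sinh (4 * cz * (t : ℂ)))))
      (((h3 * h1 - h2 * h2) / h1 ^ 2
          + 8 * cz * ((4 * cz * sh * sh - ch * (4 * cz * ch)) / sh ^ 2))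
          * (h2 / h1 + 8 * cz * (ch / sh))
        + (h2 / h1 + 8 * cz * (ch / sh))
          * ((h3 * h1 - h2 * h2) / h1 ^ 2
            + 8 * cz * ((4 * cz * sh * sh - ch * (4 * cz * ch)) / sh ^ 2))) ξ :=
    (fu.add fw).mul (fu.add fw)
  have hK : HasDerivAt (fun t =>
        (deriv (deriv h) t / deriv h t
            + 8 * cz * (Complex.cosh (4 * cz * (t : ℂ)) / Complex.sinh (4 * cz * (t : ℂ))))
          * (deriv (deriv h) t / deriv h t
            + 8 * cz * (Complex.cosh (4 * cz * (t : ℂ)) / Complex.sinh (4 * cz * (t : ℂ))))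
        + 16 * cq * ((4 * cz / Complex.sinh (4 * cz * (t : ℂ)))
              * (4 * cz / Complex.sinh (4 * cz * (t : ℂ))) * (h t * h t - C) / deriv h t
          + deriv h t
          + 8 * cz * (Complex.cosh (4 * cz * (t : ℂ)) / Complex.sinh (4 * cz * (t : ℂ)))
            * h t))
      (((h3 * h1 - h2 * h2) / h1 ^ 2
          + 8 * cz * ((4 * cz * sh * sh - ch * (4 * cz * ch)) / sh ^ 2))
          * (h2 / h1 + 8 * cz * (ch / sh))
        + (h2 / h1 + 8 * cz * (ch / sh))
          * ((h3 * h1 - h2 * h2) / h1 ^ 2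
            + 8 * cz * ((4 * cz * sh * sh - ch * (4 * cz * ch)) / sh ^ 2))
        + 16 * cq * ((((((0 * sh - 4 * cz * (4 * cz * ch)) / sh ^ 2 * (4 * cz / sh)
              + 4 * cz / sh * ((0 * sh - 4 * cz * (4 * cz * ch)) / sh ^ 2)) * (h0 * h0 - C)
              + 4 * cz / sh * (4 * cz / sh) * (h1 * h0 + h0 * h1)) * h1
            - 4 * cz / sh * (4 * cz / sh) * (h0 * h0 - C) * h2) / h1 ^ 2
          + h2
          + (8 * cz * ((4 * cz * sh * sh - ch * (4 * cz * ch)) / sh ^ 2) * h0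
            + 8 * cz * (ch / sh) * h1)))) ξ :=
    fA.add (((f3.add H2).add f5).const_mul (16 * cq))
  have hfeq : (fun t =>
        (deriv (deriv h) t / deriv h t
            + 8 * cz * (Complex.cosh (4 * cz * (t : ℂ)) / Complex.sinh (4 * cz * (t : ℂ)))) ^ 2
        + 16 * cq * ((4 * cz / Complex.sinh (4 * cz * (t : ℂ))) ^ 2 * (h t ^ 2 - C) / deriv h t
          + deriv h t
          + 8 * cz * (Complex.cosh (4 * cz * (t : ℂ)) / Complex.sinh (4 * cz * (t : ℂ)))
            * h t)) = (fun t =>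
        (deriv (deriv h) t / deriv h t
            + 8 * cz * (Complex.cosh (4 * cz * (t : ℂ)) / Complex.sinh (4 * cz * (t : ℂ))))
          * (deriv (deriv h) t / deriv h t
            + 8 * cz * (Complex.cosh (4 * cz * (t : ℂ)) / Complex.sinh (4 * cz * (t : ℂ))))
        + 16 * cq * ((4 * cz / Complex.sinh (4 * cz * (t : ℂ)))
              * (4 * cz / Complex.sinh (4 * cz * (t : ℂ))) * (h t * h t - C) / deriv h t
          + deriv h t
          + 8 * cz * (Complex.cosh (4 * cz * (t : ℂ)) / Complex.sinh (4 * cz * (t : ℂ)))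
            * h t)) := by
    funext t
    ring
  rw [hfeq, hK.deriv]
  have e := ode ξ hξ
  rw [fu.deriv] at e
  rw [← hh0, ← hh1, ← hshdef] at e
  have hid : ch ^ 2 - sh ^ 2 - 1 = 0 := by
    rw [hchdef, hshdef, Complex.cosh_sq_sub_sinh_sq]; ring
  have hu : h1 * h1⁻¹ = 1 := mul_inv_cancel₀ hd1
  linear_combination (norm := ring1)
    (2 * (h2 * h1⁻¹ + 8 * cz * (ch * sh⁻¹))) * e
    + ((-32) * cz ^ 2 * sh⁻¹ ^ 2
        * (2 * (h2 * h1⁻¹ + 8 * cz * (ch * sh⁻¹)) + 16 * cq * h0)) * hid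
    + (-16 * cq * h2 + 512 * cq * cz ^ 2 * h0 * sh⁻¹ ^ 2
        + 512 * cq * cz ^ 2 * h0 * h1 * h1⁻¹ * sh⁻¹ ^ 2
        - 2048 * cq * cz ^ 3 * h0 ^ 2 * ch * h1⁻¹ * sh⁻¹ ^ 3
        + 2048 * cq * cz ^ 3 * C * ch * h1⁻¹ * sh⁻¹ ^ 3) * hu
end

section
/- The involution (u, H, Q, Q̄) ↦ (−u, 2Q − c, (H+c)/2, (H−c)/2) maps solutions of the Gauss–Codazzi system u_{zz̄} + (1/2)(H² − c²)eᵘ − 2QQ̄e⁻ᵘ = 0, Q_z̄ − (1/2)H_z eᵘ = 0, Q̄_z − (1/2)H_z̄ eᵘ = 0 satisfying the constraint Q − Q̄ = c to solutions of the same system, and applying it twice is the identity. -/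
/-- `∂_z f`, treating `z` and `z̄` as independent complex variables. -/
noncomputable def dz (f : ℂ × ℂ → ℂ) (p : ℂ × ℂ) : ℂ := fderiv ℂ f p (1, 0)

/-- `∂_z̄ f`, treating `z` and `z̄` as independent complex variables. -/
noncomputable def dzb (f : ℂ × ℂ → ℂ) (p : ℂ × ℂ) : ℂ := fderiv ℂ f p (0, 1)

/-- The Gauss-Codazzi equations at the point `p`. -/
def GaussCodazziAt (c : ℂ) (u H Q Qb : ℂ × ℂ → ℂ) (p : ℂ × ℂ) : Prop :=
  dzb (dz u) p + (1 / 2) * (H p ^ 2 - c ^ 2) * Complex.exp (u p)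
      - 2 * Q p * Qb p * Complex.exp (-u p) = 0 ∧
  dzb Q p - (1 / 2) * dz H p * Complex.exp (u p) = 0 ∧
  dz Qb p - (1 / 2) * dzb H p * Complex.exp (u p) = 0

lemma dz_affine (f : ℂ × ℂ → ℂ) (hf : Differentiable ℂ f) (a b : ℂ) :
    dz (fun q => a * f q + b) = fun p => a * dz f p := by
  funext p
  unfold dz
  rw [fderiv_add_const, fderiv_const_mul (hf p)]
  simp

lemma dzb_affine (f : ℂ × ℂ → ℂ) (hf : Differentiable ℂ f) (a b : ℂ) :
    dzb (fun q => a * f q + b) = fun p => a * dzb f p := by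
  funext p
  unfold dzb
  rw [fderiv_add_const, fderiv_const_mul (hf p)]
  simp

lemma dz_contDiff (f : ℂ × ℂ → ℂ) (hf : ContDiff ℂ ⊤ f) : ContDiff ℂ ⊤ (dz f) := by
  have h1 : ContDiff ℂ ⊤ (fun p => fderiv ℂ f p) := hf.fderiv_right le_top
  exact (ContinuousLinearMap.apply ℂ ℂ ((1 : ℂ), (0 : ℂ))).contDiff.comp h1

/-- The involution `(u, H, Q, Q̄) ↦ (-u, 2Q - c, (H+c)/2, (H-c)/2)` maps solutions of the
Gauss-Codazzi system satisfying `Q - Q̄ = c` to solutions of the same system (with the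
transformed fields again satisfying the constraint), and applying it twice is the identity. -/
theorem stmt_5 (c : ℂ) (u H Q Qb : ℂ × ℂ → ℂ)
    (hu : ContDiff ℂ ⊤ u) (hH : ContDiff ℂ ⊤ H) (hQ : ContDiff ℂ ⊤ Q) (hQb : ContDiff ℂ ⊤ Qb)
    (hGC : ∀ p, GaussCodazziAt c u H Q Qb p)
    (hcon : ∀ p, Q p - Qb p = c) :
    (∀ p, GaussCodazziAt c (fun q => -u q) (fun q => 2 * Q q - c)
        (fun q => (H q + c) / 2) (fun q => (H q - c) / 2) p) ∧
    (∀ p : ℂ × ℂ, (H p + c) / 2 - (H p - c) / 2 = c) ∧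
    (∀ p : ℂ × ℂ, -(-u p) = u p ∧ 2 * ((H p + c) / 2) - c = H p ∧
      ((2 * Q p - c) + c) / 2 = Q p ∧ ((2 * Q p - c) - c) / 2 = Qb p) := by
  have hud : Differentiable ℂ u := hu.differentiable (by simp)
  have hHd : Differentiable ℂ H := hH.differentiable (by simp)
  have hQd : Differentiable ℂ Q := hQ.differentiable (by simp)
  have hQbd : Differentiable ℂ Qb := hQb.differentiable (by simp)
  have hdzud : Differentiable ℂ (dz u) := (dz_contDiff u hu).differentiable (by simp)
  -- rewrite transformed fields in affine form
  have eN : (fun q => -u q) = fun q => (-1 : ℂ) * u q + 0 := by funext q; ring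
  have eH : (fun q => 2 * Q q - c) = fun q => (2 : ℂ) * Q q + (-c) := by funext q; ring
  have eQ : (fun q => (H q + c) / 2) = fun q => (1 / 2 : ℂ) * H q + c / 2 := by funext q; ring
  have eQb : (fun q => (H q - c) / 2) = fun q => (1 / 2 : ℂ) * H q + (-c / 2) := by
    funext q; ring
  have hQeq : Q = fun q => (1 : ℂ) * Qb q + c := by
    funext q; linear_combination hcon q
  refine ⟨?_, fun p => by ring, fun p => ⟨by ring, by ring, by ring, ?_⟩⟩
  · intro p
    obtain ⟨h1, h2, h3⟩ := hGC p
    have hdzQ : dz Q p = dz Qb p := by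
      rw [hQeq, dz_affine Qb hQbd 1 c]; ring
    have hdzbQ : dzb Q p = dzb Qb p := by
      rw [hQeq, dzb_affine Qb hQbd 1 c]; ring
    have hexp : Complex.exp (u p) * Complex.exp (-u p) = 1 := by
      rw [← Complex.exp_add]; simp
    refine ⟨?_, ?_, ?_⟩
    · rw [eN, dz_affine u hud (-1) 0]
      have : (fun p => (-1 : ℂ) * dz u p) = fun q => (-1 : ℂ) * dz u q + 0 := by
        funext q; ring
      rw [this, dzb_affine (dz u) hdzud (-1) 0]
      simp only [neg_one_mul, neg_neg, add_zero]
      linear_combination (-1 : ℂ) * h1 + 2 * Q p * Complex.exp (-u p) * hcon p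
    · rw [eQ, eH, dzb_affine H hHd (1/2) (c/2), dz_affine Q hQd 2 (-c)]
      simp only [neg_neg]
      rw [hdzQ]
      linear_combination (-Complex.exp (-u p)) * h3 - (1 / 2) * dzb H p * hexp
    · rw [eQb, eH, dz_affine H hHd (1/2) (-c/2), dzb_affine Q hQd 2 (-c)]
      simp only [neg_neg]
      rw [hdzbQ]
      linear_combination (-Complex.exp (-u p)) * h2 - (1 / 2) * dz H p * hexp +
        Complex.exp (-u p) * hdzbQ
  · have := hcon p; linear_combination this
end

section
/- The quantity K = (η v'/v + g)² − (h² − c²)v/η − 2(h+c)q − 2(h−c)r/η² − 4qr/(ηv) is a first integral of the reduced system (η v'/v)' − (h² − c²)v/(2η²) + 2qr/(η²v) = 0, −ηvh' − 2η²q' + (1+g)vh = 0, −η²vh' − 2ηr' + 2(1−g)r = 0 under the condition (1+g)c = 0; that is, dK/dη = 0 along solutions. -/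
set_option maxHeartbeats 1000000 in
/-- The quantity `K = (η v'/v + g)² - (h² - c²)v/η - 2(h+c)q - 2(h-c)r/η² - 4qr/(ηv)` is a
first integral of the reduced system obtained by symmetry reduction of the Gauss-Codazzi
equations, under the condition `(1+g)c = 0`: `dK/dη = 0` along solutions. -/
theorem stmt_8 (g c : ℂ) (hgc : (1 + g) * c = 0) (v h q r : ℂ → ℂ) (s : Set ℂ)
    (hs : IsOpen s) (hη0 : ∀ η ∈ s, η ≠ 0) (hv0 : ∀ η ∈ s, v η ≠ 0)
    (hvd : ∀ η ∈ s, DifferentiableAt ℂ v η)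
    (hvd2 : ∀ η ∈ s, DifferentiableAt ℂ (deriv v) η)
    (hhd : ∀ η ∈ s, DifferentiableAt ℂ h η)
    (hqd : ∀ η ∈ s, DifferentiableAt ℂ q η)
    (hrd : ∀ η ∈ s, DifferentiableAt ℂ r η)
    (ode1 : ∀ η ∈ s, deriv (fun t => t * deriv v t / v t) η
        - (h η ^ 2 - c ^ 2) * v η / (2 * η ^ 2) + 2 * q η * r η / (η ^ 2 * v η) = 0)
    (ode2 : ∀ η ∈ s, -η * v η * deriv h η - 2 * η ^ 2 * deriv q η + (1 + g) * v η * h η = 0)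
    (ode3 : ∀ η ∈ s, -η ^ 2 * v η * deriv h η - 2 * η * deriv r η + 2 * (1 - g) * r η = 0) :
    ∀ η ∈ s, deriv (fun t =>
        (t * deriv v t / v t + g) ^ 2
        - (h t ^ 2 - c ^ 2) * v t / t
        - 2 * (h t + c) * q t
        - 2 * (h t - c) * r t / t ^ 2
        - 4 * q t * r t / (t * v t)) η = 0 := by
  intro η hη
  have hη0' := hη0 η hη
  have hv0' := hv0 η hη
  have hw : HasDerivAt (fun t => t * deriv v t / v t)
      (deriv (fun t => t * deriv v t / v t) η) η :=
    DifferentiableAt.hasDerivAt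
      ((differentiableAt_id.mul (hvd2 η hη)).div (hvd η hη) hv0')
  have hv : HasDerivAt v (deriv v η) η := (hvd η hη).hasDerivAt
  have hh : HasDerivAt h (deriv h η) η := (hhd η hη).hasDerivAt
  have hq : HasDerivAt q (deriv q η) η := (hqd η hη).hasDerivAt
  have hr : HasDerivAt r (deriv r η) η := (hrd η hη).hasDerivAt
  have hηv : η * v η ≠ 0 := mul_ne_zero hη0' hv0'
  have hη2 : (η : ℂ) ^ 2 ≠ 0 := pow_ne_zero 2 hη0'
  have t1 : HasDerivAt (fun t => (t * deriv v t / v t + g) ^ 2)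
      (2 * (η * deriv v η / v η + g) * deriv (fun t => t * deriv v t / v t) η) η :=
    ((hw.add_const g).pow 2).congr_deriv (by push_cast; ring)
  have t2 : HasDerivAt (fun t => (h t ^ 2 - c ^ 2) * v t / t)
      (((2 * h η * deriv h η * v η + (h η ^ 2 - c ^ 2) * deriv v η) * η
        - (h η ^ 2 - c ^ 2) * v η) / η ^ 2) η := by
    have hnum : HasDerivAt (fun t => (h t ^ 2 - c ^ 2) * v t)
        (2 * h η * deriv h η * v η + (h η ^ 2 - c ^ 2) * deriv v η) η :=
      (((hh.pow 2).sub_const (c ^ 2)).mul hv).congr_deriv (by push_cast; simp only [Pi.pow_apply]; ring)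
    exact (hnum.div (hasDerivAt_id η) hη0').congr_deriv (by simp only [id_eq]; push_cast; ring)
  have t3 : HasDerivAt (fun t => 2 * (h t + c) * q t)
      (2 * deriv h η * q η + 2 * (h η + c) * deriv q η) η :=
    ((HasDerivAt.const_mul 2 (hh.add_const c)).mul hq).congr_deriv (by ring)
  have t4 : HasDerivAt (fun t => 2 * (h t - c) * r t / t ^ 2)
      (((2 * deriv h η * r η + 2 * (h η - c) * deriv r η) * η ^ 2
        - 2 * (h η - c) * r η * (2 * η)) / (η ^ 2) ^ 2) η := by
    have hnum : HasDerivAt (fun t => 2 * (h t - c) * r t)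
        (2 * deriv h η * r η + 2 * (h η - c) * deriv r η) η :=
      ((HasDerivAt.const_mul 2 (hh.sub_const c)).mul hr).congr_deriv (by ring)
    have hden : HasDerivAt (fun t : ℂ => t ^ 2) (2 * η) η :=
      (hasDerivAt_pow 2 η).congr_deriv (by push_cast; ring)
    exact hnum.div hden hη2
  have t5 : HasDerivAt (fun t => 4 * q t * r t / (t * v t))
      (((4 * deriv q η * r η + 4 * q η * deriv r η) * (η * v η)
        - 4 * q η * r η * (v η + η * deriv v η)) / (η * v η) ^ 2) η := by
    have hnum : HasDerivAt (fun t => 4 * q t * r t)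
        (4 * deriv q η * r η + 4 * q η * deriv r η) η :=
      ((HasDerivAt.const_mul 4 hq).mul hr).congr_deriv (by ring)
    have hden : HasDerivAt (fun t => t * v t) (v η + η * deriv v η) η :=
      ((hasDerivAt_id η).mul hv).congr_deriv (by simp only [id_eq]; ring)
    exact hnum.div hden hηv
  have hf := (((t1.sub t2).sub t3).sub t4).sub t5
  refine hf.deriv.trans ?_
  have E1 : deriv (fun t => t * deriv v t / v t) η
      = (h η ^ 2 - c ^ 2) * v η / (2 * η ^ 2) - 2 * q η * r η / (η ^ 2 * v η) := by
    linear_combination ode1 η hη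
  have E2 : deriv q η = ((1 + g) * v η * h η - η * v η * deriv h η) / (2 * η ^ 2) := by
    field_simp
    linear_combination -(ode2 η hη)
  have E3 : deriv r η = (2 * (1 - g) * r η - η ^ 2 * v η * deriv h η) / (2 * η) := by
    field_simp
    linear_combination -(ode3 η hη)
  rw [E1, E2, E3]
  rcases mul_eq_zero.mp hgc with hg | hc
  · have hgeq : g = -1 := by linear_combination hg
    subst hgeq
    field_simp
    ring_nf
  · subst hc
    field_simp
    ring_nf
end

section
/- In the reduced isothermic case g = 1, c = 0, h = 0, q constant equal to c_q, the function defined by η v = (4c_q²/K) sinh²((√K/2)(ξ − ξ₀)) with η = e^ξ satisfies the first-integral equation (η v'/v + 1)² − K − 4q²/(ηv) = 0, for any constants ξ₀ and K ≠ 0 (with c_q ≠ 0). -/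
/-- In the reduced isothermic case `g = 1`, `c = 0`, `h = 0`, `q = c_q` constant, the
function `v` defined by `η v = (4c_q²/K) sinh²((√K/2)(ξ - ξ₀))` with `η = e^ξ` satisfies
the first-integral equation `(η v'/v + 1)² - K - 4q²/(ηv) = 0`. -/
theorem stmt_9 (cq K ξ0 sqrtK : ℂ) (hK : K ≠ 0) (hcq : cq ≠ 0) (hsq : sqrtK ^ 2 = K)
    (v : ℂ → ℂ) (s : Set ℂ) (hs : IsOpen s)
    (hvd : ∀ ξ ∈ s, DifferentiableAt ℂ v (Complex.exp ξ))
    (hv0 : ∀ ξ ∈ s, v (Complex.exp ξ) ≠ 0)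
    (hrel : ∀ ξ ∈ s, Complex.exp ξ * v (Complex.exp ξ)
        = (4 * cq ^ 2 / K) * Complex.sinh ((sqrtK / 2) * (ξ - ξ0)) ^ 2) :
    ∀ ξ ∈ s,
      (Complex.exp ξ * deriv v (Complex.exp ξ) / v (Complex.exp ξ) + 1) ^ 2 - K
        - 4 * cq ^ 2 / (Complex.exp ξ * v (Complex.exp ξ)) = 0 := by
  intro ξ hξ
  set E := Complex.exp ξ with hE
  set a := deriv v E with ha
  set b := v E with hb
  set S := Complex.sinh ((sqrtK / 2) * (ξ - ξ0)) with hS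
  set C2 := Complex.cosh ((sqrtK / 2) * (ξ - ξ0)) with hC2
  have hEne : E ≠ 0 := Complex.exp_ne_zero ξ
  have hbne : b ≠ 0 := hv0 ξ hξ
  have h1 : E * b = (4 * cq ^ 2 / K) * S ^ 2 := hrel ξ hξ
  -- S ≠ 0
  have hSne : S ≠ 0 := by
    intro h
    apply mul_ne_zero hEne hbne
    rw [h1, h]; ring
  -- derivative of left side
  have hfl : HasDerivAt (fun ξ => Complex.exp ξ * v (Complex.exp ξ))
      (E * b + E * (a * E)) ξ := by
    have he : HasDerivAt Complex.exp E ξ := Complex.hasDerivAt_exp ξ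
    have hv' : HasDerivAt (fun ξ => v (Complex.exp ξ)) (a * E) ξ :=
      (hvd ξ hξ).hasDerivAt.comp ξ he
    exact he.mul hv'
  -- derivative of right side
  have hfr : HasDerivAt (fun ξ => (4 * cq ^ 2 / K) * Complex.sinh ((sqrtK / 2) * (ξ - ξ0)) ^ 2)
      ((4 * cq ^ 2 / K) * (2 * S * (C2 * (sqrtK / 2)))) ξ := by
    have hin : HasDerivAt (fun ξ : ℂ => (sqrtK / 2) * (ξ - ξ0)) (sqrtK / 2) ξ := by
      simpa using ((hasDerivAt_id ξ).sub_const ξ0).const_mul (sqrtK / 2)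
    have hsinh : HasDerivAt (fun ξ : ℂ => Complex.sinh ((sqrtK / 2) * (ξ - ξ0)))
        (C2 * (sqrtK / 2)) ξ := (Complex.hasDerivAt_sinh _).comp ξ hin
    simpa using (hsinh.pow 2).const_mul (4 * cq ^ 2 / K)
  -- the two functions agree near ξ, so derivatives agree
  have heq : (fun ξ => Complex.exp ξ * v (Complex.exp ξ)) =ᶠ[nhds ξ]
      (fun ξ => (4 * cq ^ 2 / K) * Complex.sinh ((sqrtK / 2) * (ξ - ξ0)) ^ 2) :=
    Filter.eventuallyEq_of_mem (hs.mem_nhds hξ) hrel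
  have h2 : E * b + E * (a * E) = (4 * cq ^ 2 / K) * (2 * S * (C2 * (sqrtK / 2))) := by
    have := (hfl.congr_of_eventuallyEq heq.symm).unique hfr
    exact this
  have h3 : C2 ^ 2 - S ^ 2 = 1 := Complex.cosh_sq_sub_sinh_sq _
  have hab2 : (b + E * a) * S = sqrtK * C2 * b := by
    apply mul_left_cancel₀ hEne
    linear_combination S * h2 - sqrtK * C2 * h1
  have hT : E * a / b + 1 = sqrtK * C2 / S := by
    field_simp
    linear_combination hab2
  rw [hT, h1]
  field_simp
  linear_combination (C2 ^ 2) * hsq + K * h3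
end

section
/- In the reduced case g = −1 with h constant equal to h₀ and q = 0, the function v defined by η/v = ((h₀² − c²)/K) sinh²((√K/2)ξ − ξ₀) with η = e^ξ satisfies the first-integral equation (η v'/v − 1)² − K − (h₀² − c²)v/η = 0, for any constants ξ₀ and K with (h₀² − c²)K ≠ 0. -/
/-- In the reduced case `g = -1` with `h = h₀` constant and `q = 0`, the function `v`
defined by `η/v = ((h₀² - c²)/K) sinh²((√K/2)ξ - ξ₀)` with `η = e^ξ` satisfies the
first-integral equation `(η v'/v - 1)² - K - (h₀² - c²)v/η = 0`. -/
theorem stmt_10 (h0 c K ξ0 sqrtK : ℂ) (hK : (h0 ^ 2 - c ^ 2) * K ≠ 0) (hsq : sqrtK ^ 2 = K)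
    (v : ℂ → ℂ) (s : Set ℂ) (hs : IsOpen s)
    (hvd : ∀ ξ ∈ s, DifferentiableAt ℂ v (Complex.exp ξ))
    (hv0 : ∀ ξ ∈ s, v (Complex.exp ξ) ≠ 0)
    (hrel : ∀ ξ ∈ s, Complex.exp ξ / v (Complex.exp ξ)
        = ((h0 ^ 2 - c ^ 2) / K) * Complex.sinh ((sqrtK / 2) * ξ - ξ0) ^ 2) :
    ∀ ξ ∈ s,
      (Complex.exp ξ * deriv v (Complex.exp ξ) / v (Complex.exp ξ) - 1) ^ 2 - K
        - (h0 ^ 2 - c ^ 2) * v (Complex.exp ξ) / Complex.exp ξ = 0 := by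
  intro ξ hξ
  have ha : Complex.exp ξ ≠ 0 := Complex.exp_ne_zero ξ
  have hV : v (Complex.exp ξ) ≠ 0 := hv0 ξ hξ
  have hA : (h0 ^ 2 - c ^ 2) ≠ 0 := left_ne_zero_of_mul hK
  have hKne : K ≠ 0 := right_ne_zero_of_mul hK
  have hr := hrel ξ hξ
  set S := Complex.sinh ((sqrtK / 2) * ξ - ξ0) with hS_def
  set C := Complex.cosh ((sqrtK / 2) * ξ - ξ0) with hC_def
  have hSne : S ≠ 0 := by
    intro h
    exact div_ne_zero ha hV (by rw [hr, h]; ring)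
  -- derivative of inner function
  have hin : HasDerivAt (fun x : ℂ => (sqrtK / 2) * x - ξ0) (sqrtK / 2) ξ := by
    simpa using ((hasDerivAt_id ξ).const_mul (sqrtK / 2)).sub_const ξ0
  have hg : HasDerivAt
      (fun x => ((h0 ^ 2 - c ^ 2) / K) * Complex.sinh ((sqrtK / 2) * x - ξ0) ^ 2)
      (((h0 ^ 2 - c ^ 2) / K) * (2 * S * (C * (sqrtK / 2)))) ξ := by
    have := ((hin.csinh).pow 2).const_mul ((h0 ^ 2 - c ^ 2) / K)
    simpa [hS_def, hC_def, mul_comm, mul_assoc, mul_left_comm] using this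
  have he : HasDerivAt Complex.exp (Complex.exp ξ) ξ := Complex.hasDerivAt_exp ξ
  have hvc : HasDerivAt (fun x => v (Complex.exp x))
      (deriv v (Complex.exp ξ) * Complex.exp ξ) ξ :=
    ((hvd ξ hξ).hasDerivAt).comp ξ he
  have hf : HasDerivAt (fun x => Complex.exp x / v (Complex.exp x))
      ((Complex.exp ξ * v (Complex.exp ξ)
        - Complex.exp ξ * (deriv v (Complex.exp ξ) * Complex.exp ξ)) / v (Complex.exp ξ) ^ 2) ξ :=
    he.div hvc hV
  have heq : (fun x => Complex.exp x / v (Complex.exp x)) =ᶠ[nhds ξ]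
      (fun x => ((h0 ^ 2 - c ^ 2) / K) * Complex.sinh ((sqrtK / 2) * x - ξ0) ^ 2) := by
    filter_upwards [hs.mem_nhds hξ] with x hx using hrel x hx
  have hg' : HasDerivAt (fun x => Complex.exp x / v (Complex.exp x))
      (((h0 ^ 2 - c ^ 2) / K) * (2 * S * (C * (sqrtK / 2)))) ξ :=
    hg.congr_of_eventuallyEq heq
  have key : (Complex.exp ξ * v (Complex.exp ξ)
        - Complex.exp ξ * (deriv v (Complex.exp ξ) * Complex.exp ξ)) / v (Complex.exp ξ) ^ 2
      = ((h0 ^ 2 - c ^ 2) / K) * (2 * S * (C * (sqrtK / 2))) := hf.unique hg'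
  set a := Complex.exp ξ
  set V := v a
  set V' := deriv v a
  have hc : C ^ 2 - S ^ 2 = 1 := Complex.cosh_sq_sub_sinh_sq _
  have h1 : a * K = (h0 ^ 2 - c ^ 2) * S ^ 2 * V := by
    field_simp at hr; linear_combination hr
  have e : S * (V - a * V') = C * sqrtK * V := by
    apply mul_left_cancel₀ (mul_ne_zero (mul_ne_zero hA hSne) hV)
    field_simp at key
    linear_combination key - (V - a * V') * h1
  field_simp
  have hG : S ^ 2 * (((a * V' - V) ^ 2 - V ^ 2 * K) * a - V ^ 2 * ((h0 ^ 2 - c ^ 2) * V)) = 0 := by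
    linear_combination a * (S * (V - a * V') + C * sqrtK * V) * e
      + a * V ^ 2 * C ^ 2 * hsq + a * V ^ 2 * K * hc + V ^ 2 * h1
  linear_combination (mul_eq_zero.mp hG).resolve_left (pow_ne_zero 2 hSne)
end

section
/- Any differentiable function V(X) satisfying the first-order Riccati-type equation X(X−1)V'/(V(V−1)(V−X)) + θ₀/V + θ₁/(V−1) + (θ_X − 1)/(V−X) = 0 with θ_∞ = (1+g)/2, θ₀ = √K/2, θ₁ = −√K/2, θ_X = (1−g)/2 also satisfies the sixth Painlevé equation with parameters (θ_∞², θ₀², θ₁², θ_X²) = (((1+g)/2)², K/4, K/4, ((1−g)/2)²). -/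
set_option maxHeartbeats 1000000 in
theorem eRgen_p6 (g s w a b c d e : ℂ) (ha : a ≠ 0) (hb : b ≠ 0) (hc : c ≠ 0)
    (hd : d ≠ 0) (he : e ≠ 0) :
    (1 / 2 * (1 / a + 1 / b + 1 / c) * w ^ 2 - (1 / d + 1 / e + 1 / c) * w
      + a * b * c / (2 * d ^ 2 * e ^ 2) * (((1 + g) / 2) ^ 2 - s ^ 2 / 4 * d / a ^ 2
        + s ^ 2 / 4 * e / b ^ 2 + (1 - ((1 - g) / 2) ^ 2) * d * e / c ^ 2))
      * (2 * a ^ 2 * b ^ 2 * c ^ 2 * (d * e) ^ 2)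
    = w^2*(d*e)^2*a*b*c*(b*c+a*c+a*b)
      - 2*w*a^2*b^2*(c^2*(d*e^2+d^2*e)+c*(d*e)^2)
      + ((1+g)/2)^2*a^3*b^3*c^3
      - s^2/4*d*a*b^3*c^3
      + s^2/4*e*a^3*b*c^3
      + (1-((1-g)/2)^2)*d*e*a^3*b^3*c := by
  have Ha : a * a⁻¹ = 1 := mul_inv_cancel₀ ha
  have Hb : b * b⁻¹ = 1 := mul_inv_cancel₀ hb
  have Hc : c * c⁻¹ = 1 := mul_inv_cancel₀ hc
  have Hd : d * d⁻¹ = 1 := mul_inv_cancel₀ hd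
  have He : e * e⁻¹ = 1 := mul_inv_cancel₀ he
  linear_combination
    ((-1/4)*s^2*a*b^3*c^3*d^3*e^2*d⁻¹^2*e⁻¹^2 + (-1/4)*s^2*a^2*b^3*c^3*d^3*e^2*a⁻¹*d⁻¹^2*e⁻¹^2
      + w^2*a*b^2*c^2*d^2*e^2) * Ha
    + ((1/4)*s^2*a^3*b*c^3*d^2*e^3*d⁻¹^2*e⁻¹^2 + (1/4)*s^2*a^3*b^2*c^3*d^2*e^3*b⁻¹*d⁻¹^2*e⁻¹^2
      + w^2*a^2*b*c^2*d^2*e^2) * Hb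
    + ((3/4)*a^3*b^3*c*d^3*e^3*d⁻¹^2*e⁻¹^2 + (3/4)*a^3*b^3*c^2*d^3*e^3*c⁻¹*d⁻¹^2*e⁻¹^2
      + (1/2)*g*a^3*b^3*c*d^3*e^3*d⁻¹^2*e⁻¹^2 + (1/2)*g*a^3*b^3*c^2*d^3*e^3*c⁻¹*d⁻¹^2*e⁻¹^2
      + (-1/4)*g^2*a^3*b^3*c*d^3*e^3*d⁻¹^2*e⁻¹^2 + (-1/4)*g^2*a^3*b^3*c^2*d^3*e^3*c⁻¹*d⁻¹^2*e⁻¹^2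
      + (-2)*w*a^2*b^2*c*d^2*e^2 + w^2*a^2*b^2*c*d^2*e^2) * Hc
    + ((3/4)*a^3*b^3*c*d*e^3*e⁻¹^2 + (3/4)*a^3*b^3*c*d^2*e^3*d⁻¹*e⁻¹^2 + (1/4)*a^3*b^3*c^3*e^2*e⁻¹^2
      + (1/4)*a^3*b^3*c^3*d*e^2*d⁻¹*e⁻¹^2 + (-1/4)*s^2*a*b^3*c^3*d*e^2*e⁻¹^2
      + (-1/4)*s^2*a*b^3*c^3*d^2*e^2*d⁻¹*e⁻¹^2 + (1/4)*s^2*a^3*b*c^3*e^3*e⁻¹^2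
      + (1/4)*s^2*a^3*b*c^3*d*e^3*d⁻¹*e⁻¹^2 + (1/2)*g*a^3*b^3*c*d*e^3*e⁻¹^2
      + (1/2)*g*a^3*b^3*c*d^2*e^3*d⁻¹*e⁻¹^2 + (1/2)*g*a^3*b^3*c^3*e^2*e⁻¹^2
      + (1/2)*g*a^3*b^3*c^3*d*e^2*d⁻¹*e⁻¹^2 + (-1/4)*g^2*a^3*b^3*c*d*e^3*e⁻¹^2
      + (-1/4)*g^2*a^3*b^3*c*d^2*e^3*d⁻¹*e⁻¹^2 + (1/4)*g^2*a^3*b^3*c^3*e^2*e⁻¹^2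
      + (1/4)*g^2*a^3*b^3*c^3*d*e^2*d⁻¹*e⁻¹^2 + (-2)*w*a^2*b^2*c^2*d*e^2) * Hd
    + ((3/4)*a^3*b^3*c*d*e + (3/4)*a^3*b^3*c*d*e^2*e⁻¹ + (1/4)*a^3*b^3*c^3 + (1/4)*a^3*b^3*c^3*e*e⁻¹
      + (-1/4)*s^2*a*b^3*c^3*d + (-1/4)*s^2*a*b^3*c^3*d*e*e⁻¹ + (1/4)*s^2*a^3*b*c^3*e
      + (1/4)*s^2*a^3*b*c^3*e^2*e⁻¹ + (1/2)*g*a^3*b^3*c*d*e + (1/2)*g*a^3*b^3*c*d*e^2*e⁻¹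
      + (1/2)*g*a^3*b^3*c^3 + (1/2)*g*a^3*b^3*c^3*e*e⁻¹ + (-1/4)*g^2*a^3*b^3*c*d*e
      + (-1/4)*g^2*a^3*b^3*c*d*e^2*e⁻¹ + (1/4)*g^2*a^3*b^3*c^3 + (1/4)*g^2*a^3*b^3*c^3*e*e⁻¹
      + (-2)*w*a^2*b^2*c^2*d^2*e) * He

set_option maxHeartbeats 2000000 in
theorem aux_p6 (g sqrtK X v w : ℂ) (h0 : v ≠ 0) (h1 : v - 1 ≠ 0) (hx : v - X ≠ 0)
    (hX0 : X ≠ 0) (hX1 : X - 1 ≠ 0)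
    (hw : w * (X * (X - 1)) = -(sqrtK / 2 * ((v - 1) * (v - X)) + -sqrtK / 2 * (v * (v - X))
        + ((1 - g) / 2 - 1) * (v * (v - 1)))) :
    ((-(sqrtK / 2 * (w * (v - X) + (v - 1) * (w - 1)) + -sqrtK / 2 * (w * (v - X) + v * (w - 1))
        + ((1 - g) / 2 - 1) * (w * (v - 1) + v * w)) * (X * (X - 1))
      - -(sqrtK / 2 * ((v - 1) * (v - X)) + -sqrtK / 2 * (v * (v - X))
        + ((1 - g) / 2 - 1) * (v * (v - 1))) * (1 * (X - 1) + X * 1)) / (X * (X - 1)) ^ 2)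
    = 1 / 2 * (1 / v + 1 / (v - 1) + 1 / (v - X)) * w ^ 2
      - (1 / X + 1 / (X - 1) + 1 / (v - X)) * w
      + v * (v - 1) * (v - X) / (2 * X ^ 2 * (X - 1) ^ 2) * (((1 + g) / 2) ^ 2
        - sqrtK ^ 2 / 4 * X / v ^ 2 + sqrtK ^ 2 / 4 * (X - 1) / (v - 1) ^ 2
        + (1 - ((1 - g) / 2) ^ 2) * X * (X - 1) / (v - X) ^ 2) := by
  have hD : (2:ℂ) * v ^ 2 * (v-1) ^ 2 * (v-X) ^ 2 * (X*(X-1)) ^ 2 ≠ 0 := by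
    apply mul_ne_zero; apply mul_ne_zero; apply mul_ne_zero; apply mul_ne_zero
    · exact two_ne_zero
    · exact pow_ne_zero _ h0
    · exact pow_ne_zero _ h1
    · exact pow_ne_zero _ hx
    · exact pow_ne_zero _ (mul_ne_zero hX0 hX1)
  apply mul_right_cancel₀ hD
  have eL : ((-(sqrtK / 2 * (w * (v - X) + (v - 1) * (w - 1)) + -sqrtK / 2 * (w * (v - X) + v * (w - 1))
        + ((1 - g) / 2 - 1) * (w * (v - 1) + v * w)) * (X * (X - 1))
      - -(sqrtK / 2 * ((v - 1) * (v - X)) + -sqrtK / 2 * (v * (v - X))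
        + ((1 - g) / 2 - 1) * (v * (v - 1))) * (1 * (X - 1) + X * 1)) / (X * (X - 1)) ^ 2)
      * ((2:ℂ) * v ^ 2 * (v-1) ^ 2 * (v-X) ^ 2 * (X*(X-1)) ^ 2)
    = (-(sqrtK / 2 * (w * (v - X) + (v - 1) * (w - 1)) + -sqrtK / 2 * (w * (v - X) + v * (w - 1))
        + ((1 - g) / 2 - 1) * (w * (v - 1) + v * w)) * (X * (X - 1))
      - -(sqrtK / 2 * ((v - 1) * (v - X)) + -sqrtK / 2 * (v * (v - X))
        + ((1 - g) / 2 - 1) * (v * (v - 1))) * (2*X - 1)) * (2*v^2*(v-1)^2*(v-X)^2) := by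
    field_simp
    ring
  rw [eL, eRgen_p6 g sqrtK w v (v-1) (v-X) X (X-1) h0 h1 hx hX0 hX1]
  linear_combination ((2*X*v^3 - 5*X*v^4 + 3*X*v^5 - 3*X^2*v^2 + 6*X^2*v^3 - 3*X^2*v^5
      + X^3*v - 6*X^3*v^3 + 5*X^3*v^4 - X^4*v + 3*X^4*v^2 - 2*X^4*v^3) * w
    + (-2*v^4 + (9/2)*v^5 - 3*v^6 + (1/2)*v^7 + (5/2)*X*v^3 - (5/2)*X*v^4 - (5/2)*X*v^5
      + (5/2)*X*v^6 - (1/2)*X^2*v^2 - 4*X^2*v^3 + (19/2)*X^2*v^4 - 5*X^2*v^5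
      + 2*X^3*v^2 - 4*X^3*v^3 + 2*X^3*v^4
      + (1/2)*sqrtK*v^5 - (1/2)*sqrtK*v^6 + (1/2)*sqrtK*X*v^3 - (5/2)*sqrtK*X*v^4
      + 2*sqrtK*X*v^5 - sqrtK*X^2*v^2 + (7/2)*sqrtK*X^2*v^3 - (5/2)*sqrtK*X^2*v^4
      + (1/2)*sqrtK*X^3*v - (3/2)*sqrtK*X^3*v^2 + sqrtK*X^3*v^3
      + (1/2)*g*v^5 - g*v^6 + (1/2)*g*v^7 + (1/2)*g*X*v^3 - (5/2)*g*X*v^4 + (7/2)*g*X*v^5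
      - (3/2)*g*X*v^6 - (1/2)*g*X^2*v^2 + 2*g*X^2*v^3 - (5/2)*g*X^2*v^4 + g*X^2*v^5)) * hw

/-- Any differentiable solution of the Riccati-type equation
`X(X-1)V'/(V(V-1)(V-X)) + θ₀/V + θ₁/(V-1) + (θ_X - 1)/(V-X) = 0` with
`θ_∞ = (1+g)/2`, `θ₀ = √K/2`, `θ₁ = -√K/2`, `θ_X = (1-g)/2` also satisfies the sixth
Painlevé equation with parameters `(θ_∞², θ₀², θ₁², θ_X²) = (((1+g)/2)², K/4, K/4, ((1-g)/2)²)`. -/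
theorem stmt_12 (g K sqrtK : ℂ) (hsq : sqrtK ^ 2 = K) (V : ℂ → ℂ) (s : Set ℂ) (hs : IsOpen s)
    (hV1 : ∀ X ∈ s, DifferentiableAt ℂ V X)
    (hnd : ∀ X ∈ s, V X ≠ 0 ∧ V X - 1 ≠ 0 ∧ V X - X ≠ 0 ∧ X ≠ 0 ∧ X - 1 ≠ 0)
    (hric : ∀ X ∈ s, X * (X - 1) * deriv V X / (V X * (V X - 1) * (V X - X))
        + (sqrtK / 2) / V X + (-sqrtK / 2) / (V X - 1)
        + ((1 - g) / 2 - 1) / (V X - X) = 0) :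
    ∀ X ∈ s, deriv (deriv V) X =
      (1 / 2) * (1 / V X + 1 / (V X - 1) + 1 / (V X - X)) * (deriv V X) ^ 2
      - (1 / X + 1 / (X - 1) + 1 / (V X - X)) * deriv V X
      + V X * (V X - 1) * (V X - X) / (2 * X ^ 2 * (X - 1) ^ 2)
        * (((1 + g) / 2) ^ 2 - (K / 4) * X / (V X) ^ 2 + (K / 4) * (X - 1) / (V X - 1) ^ 2
          + (1 - ((1 - g) / 2) ^ 2) * X * (X - 1) / (V X - X) ^ 2) := by
  subst hsq
  have key : ∀ X ∈ s, deriv V X =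
      -(sqrtK / 2 * ((V X - 1) * (V X - X)) + -sqrtK / 2 * (V X * (V X - X))
        + ((1 - g) / 2 - 1) * (V X * (V X - 1))) / (X * (X - 1)) := by
    intro X hX
    obtain ⟨h0, h1, hx, hX0, hX1⟩ := hnd X hX
    have h := hric X hX
    have hB : V X * (V X - 1) * (V X - X) ≠ 0 := mul_ne_zero (mul_ne_zero h0 h1) hx
    field_simp at h
    have h' : V X * (V X - 1) * (V X - X) * (X * (X - 1) * deriv V X) =
        V X * (V X - 1) * (V X - X) * (-(sqrtK / 2 * ((V X - 1) * (V X - X))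
          + -sqrtK / 2 * (V X * (V X - X))
          + ((1 - g) / 2 - 1) * (V X * (V X - 1)))) := by linear_combination V X * (V X - 1) * (V X - X) * h / 2
    have h'' := mul_left_cancel₀ hB h'
    rw [eq_div_iff (mul_ne_zero hX0 hX1)]
    linear_combination h''
  intro X hX
  obtain ⟨h0, h1, hx, hX0, hX1⟩ := hnd X hX
  have hV := (hV1 X hX).hasDerivAt
  have hid : HasDerivAt (fun Y : ℂ => Y) 1 X := hasDerivAt_id X
  have hnum := (((((hV.sub_const 1).mul (hV.sub hid)).const_mul (sqrtK/2)).add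
      ((hV.mul (hV.sub hid)).const_mul (-sqrtK/2))).add
      ((hV.mul (hV.sub_const 1)).const_mul ((1-g)/2 - 1))).neg
  have hden : HasDerivAt (fun Y : ℂ => Y*(Y-1)) (1*(X-1) + X*1) X := hid.mul (hid.sub_const 1)
  have hW := hnum.div hden (mul_ne_zero hX0 hX1)
  have hev : deriv V =ᶠ[nhds X]
      (fun Y => -(sqrtK / 2 * ((V Y - 1) * (V Y - Y)) + -sqrtK / 2 * (V Y * (V Y - Y))
        + ((1 - g) / 2 - 1) * (V Y * (V Y - 1))) / (Y * (Y - 1))) := by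
    filter_upwards [hs.mem_nhds hX] with Y hY using key Y hY
  rw [hev.deriv_eq.trans hW.deriv]
  have hw' : deriv V X * (X * (X - 1)) = -(sqrtK / 2 * ((V X - 1) * (V X - X))
      + -sqrtK / 2 * (V X * (V X - X)) + ((1 - g) / 2 - 1) * (V X * (V X - 1))) :=
    (eq_div_iff (mul_ne_zero hX0 hX1)).mp (key X hX)
  exact aux_p6 g sqrtK X (V X) (deriv V X) h0 h1 hx hX0 hX1 hw'
end
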